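/- Assume Γ_1 > 0. Let π₁ and π₂ be policies that coincide for the first k steps, i.e., π₁(ae_{<t}) = π₂(ae_{<t}) for every history ae_{<t} consistent with π₁ with t ≤ k. Then for every CCS ν, |V^{π₁}_ν(ϵ) − V^{π₂}_ν(ϵ)| ≤ Γ_{k+1}/Γ_1, where ϵ denotes the empty history. -/

import Mathlib

open scoped Classical

/-- A history: a finite alternating sequence of action–percept pairs. -/
abbrev Hist (A E : Type*) := List (A × E)

/-- A policy maps histories to actions. -/
abbrev Policy (A E : Type*) := Hist A E → A

/-- A chronological conditional semimeasure (CCS, environment):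
values in `[0,1]`, and the chronological semimeasure condition. -/
structure CCS (A E : Type*) [Fintype E] where
  val : Hist A E → ℝ
  nonneg : ∀ h, 0 ≤ val h
  le_one : ∀ h, val h ≤ 1
  chrono : ∀ (h : Hist A E) (a : A), (∑ e : E, val (h ++ [(a, e)])) ≤ val h

/-- `Gam γ t = Γ_t = ∑_{i ≥ t} γ_i`, the discount normalization factor. -/
noncomputable def Gam (γ : ℕ → ℝ) (t : ℕ) : ℝ := ∑' i : ℕ, γ (t + i)

/-- Extend a history by a list of percepts, with actions chosen by the policy `π`. -/
def extendH {A E : Type*} (π : Policy A E) : Hist A E → List E → Hist A E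
  | h, [] => h
  | h, e :: es => extendH π (h ++ [(π h, e)]) es

/-- The value `V^π_ν(ae_{<t})` of policy `π` in environment `ν` given history `h = ae_{<t}`
(with `t = h.length + 1`); `0` whenever `Γ_t ≤ 0` or `ν(e_{<t} ∣ a_{<t}) ≤ 0`. -/
noncomputable def V {A E : Type*} [Fintype E] (γ : ℕ → ℝ) (r : E → ℝ)
    (π : Policy A E) (ν : CCS A E) (h : Hist A E) : ℝ :=
  if 0 < Gam γ (h.length + 1) ∧ 0 < ν.val h then
    (1 / (Gam γ (h.length + 1) * ν.val h)) *
      ∑' n : ℕ, γ (h.length + 1 + n) *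
        ∑ es : Fin (n + 1) → E,
          r (es (Fin.last n)) * ν.val (extendH π h (List.ofFn es))
  else 0

/-- The value `V^π_ν(h a)` of a history ending in the action `a`:
the action at time `t` is `a`, and `π` is followed from time `t+1` on. -/
noncomputable def Vact {A E : Type*} [Fintype E] (γ : ℕ → ℝ) (r : E → ℝ)
    (π : Policy A E) (ν : CCS A E) (h : Hist A E) (a : A) : ℝ :=
  V γ r (fun h' => if h' = h then a else π h') ν h

/-- The optimal value `V^*_ν(h) = sup_π V^π_ν(h)`. -/
noncomputable def VOpt {A E : Type*} [Fintype E] (γ : ℕ → ℝ) (r : E → ℝ)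
    (ν : CCS A E) (h : Hist A E) : ℝ :=
  ⨆ π : Policy A E, V γ r π ν h

/-- The optimal value `V^*_ν(h a)` of a history ending in an action. -/
noncomputable def VOptAct {A E : Type*} [Fintype E] (γ : ℕ → ℝ) (r : E → ℝ)
    (ν : CCS A E) (h : Hist A E) (a : A) : ℝ :=
  ⨆ π : Policy A E, Vact γ r π ν h a

/-- A history is consistent with `π` iff each of its actions is the one chosen by `π`. -/
def Consistent {A E : Type*} (π : Policy A E) (h : Hist A E) : Prop :=
  ∀ (k : ℕ) (hk : k < h.length), (h.get ⟨k, hk⟩).1 = π (h.take k)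

section Aux
variable {A E : Type*} [Fintype E]

lemma sum_extend_le (ν : CCS A E) (π : Policy A E) :
    ∀ (n : ℕ) (h : Hist A E),
      ∑ es : Fin n → E, ν.val (extendH π h (List.ofFn es)) ≤ ν.val h := by
  intro n
  induction n with
  | zero => intro h; simp [extendH]
  | succ n ih =>
      intro h
      have hsum : ∑ es : Fin (n+1) → E, ν.val (extendH π h (List.ofFn es))
          = ∑ e : E, ∑ t : Fin n → E,
              ν.val (extendH π (h ++ [(π h, e)]) (List.ofFn t)) := by
        rw [← Fintype.sum_equiv (Fin.consEquiv (fun _ : Fin (n+1) => E))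
          (fun p : E × (Fin n → E) =>
            ν.val (extendH π (h ++ [(π h, p.1)]) (List.ofFn p.2)))
          (fun es => ν.val (extendH π h (List.ofFn es)))
          (by
            rintro ⟨e, t⟩
            show _ = ν.val (extendH π h (List.ofFn ((Fin.consEquiv fun _ => E) (e, t))))
            have h1 : ((Fin.consEquiv fun _ : Fin (n+1) => E) (e, t)) = Fin.cons e t := rfl
            have h2 : List.ofFn (Fin.cons e t : Fin (n+1) → E) = e :: List.ofFn t := by
              simp [List.ofFn_succ]
            rw [h1, h2]
            rfl)]
        rw [Fintype.sum_prod_type]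
      rw [hsum]
      calc ∑ e : E, ∑ t : Fin n → E, ν.val (extendH π (h ++ [(π h, e)]) (List.ofFn t))
          ≤ ∑ e : E, ν.val (h ++ [(π h, e)]) :=
            Finset.sum_le_sum (fun e _ => ih (h ++ [(π h, e)]))
        _ ≤ ν.val h := ν.chrono h (π h)

lemma S_nonneg (ν : CCS A E) (π : Policy A E) (r : E → ℝ) (hr : ∀ e, 0 ≤ r e ∧ r e ≤ 1)
    (n : ℕ) (h : Hist A E) :
    0 ≤ ∑ es : Fin (n+1) → E, r (es (Fin.last n)) * ν.val (extendH π h (List.ofFn es)) :=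
  Finset.sum_nonneg fun es _ => mul_nonneg (hr _).1 (ν.nonneg _)

lemma S_le (ν : CCS A E) (π : Policy A E) (r : E → ℝ) (hr : ∀ e, 0 ≤ r e ∧ r e ≤ 1)
    (n : ℕ) (h : Hist A E) :
    ∑ es : Fin (n+1) → E, r (es (Fin.last n)) * ν.val (extendH π h (List.ofFn es))
      ≤ ν.val h := by
  calc ∑ es : Fin (n+1) → E, r (es (Fin.last n)) * ν.val (extendH π h (List.ofFn es))
      ≤ ∑ es : Fin (n+1) → E, ν.val (extendH π h (List.ofFn es)) :=
        Finset.sum_le_sum fun es _ => by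
          nlinarith [(hr (es (Fin.last n))).1, (hr (es (Fin.last n))).2,
            ν.nonneg (extendH π h (List.ofFn es))]
    _ ≤ ν.val h := sum_extend_le ν π (n+1) h

lemma consistent_snoc (π : Policy A E) (h : Hist A E) (hc : Consistent π h) (e : E) :
    Consistent π (h ++ [(π h, e)]) := by
  intro j hj
  have hj2 : j < h.length + 1 := by simpa using hj
  rcases lt_or_eq_of_le (Nat.lt_succ_iff.mp hj2) with hj' | hj'
  · have hget : ((h ++ [(π h, e)]).get ⟨j, hj⟩) = h.get ⟨j, hj'⟩ := by
      simp [List.getElem_append_left hj']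
    have htake : (h ++ [(π h, e)]).take j = h.take j :=
      List.take_append_of_le_length (le_of_lt hj')
    rw [hget, htake]; exact hc j hj'
  · have hget : ((h ++ [(π h, e)]).get ⟨j, hj⟩) = (π h, e) := by
      simp only [List.get_eq_getElem]
      exact List.getElem_concat_length hj' _
    have htake : (h ++ [(π h, e)]).take j = h := by
      rw [hj']; exact List.take_left
    rw [hget, htake]

lemma extend_agree (π₁ π₂ : Policy A E) (k : ℕ)
    (hcoin : ∀ h : Hist A E, Consistent π₁ h → h.length < k → π₁ h = π₂ h) :
    ∀ (es : List E) (h : Hist A E), Consistent π₁ h → h.length + es.length ≤ k →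
      extendH π₁ h es = extendH π₂ h es := by
  intro es
  induction es with
  | nil => intro h _ _; rfl
  | cons e es ih =>
      intro h hc hlen
      have hlt : h.length < k := by
        simp only [List.length_cons] at hlen; omega
      have heq : π₁ h = π₂ h := hcoin h hc hlt
      have : extendH π₁ h (e :: es) = extendH π₁ (h ++ [(π₁ h, e)]) es := rfl
      rw [this, ih (h ++ [(π₁ h, e)]) (consistent_snoc π₁ h hc e)
        (by simp only [List.length_append, List.length_singleton, List.length_cons,
              List.length_nil] at hlen ⊢; omega)]
      rw [heq]; rfl

end Aux


set_option maxHeartbeats 1000000 in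
theorem discounted_values {A E : Type*} [Fintype A] [Nonempty A] [Fintype E] [Nonempty E]
    (γ : ℕ → ℝ) (hγ0 : ∀ t, 0 ≤ γ t) (hγs : Summable γ)
    (r : E → ℝ) (hr : ∀ e : E, 0 ≤ r e ∧ r e ≤ 1)
    (hΓ1 : 0 < Gam γ 1) (k : ℕ) (π₁ π₂ : Policy A E)
    (hcoin : ∀ h : Hist A E, Consistent π₁ h → h.length < k → π₁ h = π₂ h)
    (ν : CCS A E) :
    |V γ r π₁ ν [] - V γ r π₂ ν []| ≤ Gam γ (k + 1) / Gam γ 1 := by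
  have hΓk1 : 0 ≤ Gam γ (k+1) := tsum_nonneg fun i => hγ0 _
  have hRHS : 0 ≤ Gam γ (k + 1) / Gam γ 1 := div_nonneg hΓk1 hΓ1.le
  by_cases hν : 0 < ν.val []
  · set ν₀ := ν.val [] with hν₀
    -- the two sums
    set S : Policy A E → ℕ → ℝ := fun π n =>
      ∑ es : Fin (n + 1) → E, r (es (Fin.last n)) * ν.val (extendH π [] (List.ofFn es))
      with hS
    have hγshift : Summable (fun n => γ (1 + n)) := by
      simpa [add_comm] using (summable_nat_add_iff 1).mpr hγs
    have hSb : ∀ π n, 0 ≤ S π n ∧ S π n ≤ ν₀ := fun π n =>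
      ⟨S_nonneg ν π r hr n [], S_le ν π r hr n []⟩
    have hsummable : ∀ π : Policy A E, Summable (fun n => γ (1 + n) * S π n) := by
      intro π
      apply Summable.of_nonneg_of_le
        (fun n => mul_nonneg (hγ0 _) (hSb π n).1)
        (fun n => ?_) (hγshift.mul_right ν₀)
      exact mul_le_mul_of_nonneg_left (hSb π n).2 (hγ0 _)
    have hV : ∀ π : Policy A E, V γ r π ν []
        = (1 / (Gam γ 1 * ν₀)) * ∑' n, γ (1 + n) * S π n := by
      intro π
      rw [V]
      simp only [List.length_nil, Nat.zero_add]
      rw [if_pos ⟨hΓ1, hν⟩]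
    have hagree : ∀ n, n < k → S π₁ n = S π₂ n := by
      intro n hn
      apply Finset.sum_congr rfl
      intro es _
      have : extendH π₁ [] (List.ofFn es) = extendH π₂ [] (List.ofFn es) := by
        apply extend_agree π₁ π₂ k hcoin
        · intro j hj; simp at hj
        · simp only [List.length_nil, List.length_ofFn, Nat.zero_add]; omega
      rw [this]
    -- bound the difference of the tails
    set g : ℕ → ℝ := fun n => if n < k then 0 else γ (1 + n) * ν₀ with hg
    have hgsum : Summable g := by
      apply Summable.of_nonneg_of_le (fun n => ?_) (fun n => ?_) (hγshift.mul_right ν₀)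
      · by_cases hnk : n < k <;> simp [hg, hnk, mul_nonneg (hγ0 (1 + n)) hν.le]
      · by_cases hnk : n < k <;> simp [hg, hnk, mul_nonneg (hγ0 (1 + n)) hν.le]
    have hdiff : ∑' n, γ (1+n) * S π₁ n - ∑' n, γ (1+n) * S π₂ n
        = ∑' n, γ (1+n) * (S π₁ n - S π₂ n) := by
      rw [← Summable.tsum_sub (hsummable π₁) (hsummable π₂)]
      congr 1; ext n; ring
    have habs : |∑' n, γ (1+n) * (S π₁ n - S π₂ n)| ≤ ∑' n, g n := by
      have hsub : Summable (fun n => γ (1+n) * (S π₁ n - S π₂ n)) := by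
        have := (hsummable π₁).sub (hsummable π₂)
        refine this.congr fun n => ?_
        show γ (1+n) * S π₁ n - γ (1+n) * S π₂ n = γ (1+n) * (S π₁ n - S π₂ n); ring
      have hpt : ∀ n, |γ (1+n) * (S π₁ n - S π₂ n)| ≤ g n := by
        intro n
        by_cases hnk : n < k
        · simp [hg, hnk, hagree n hnk]
        · simp only [hg, if_neg hnk]
          rw [abs_mul, abs_of_nonneg (hγ0 _)]
          apply mul_le_mul_of_nonneg_left _ (hγ0 _)
          rw [abs_sub_le_iff]
          constructor <;> nlinarith [(hSb π₁ n).1, (hSb π₁ n).2, (hSb π₂ n).1, (hSb π₂ n).2]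
      rw [abs_le]
      constructor
      · rw [← tsum_neg]
        apply Summable.tsum_le_tsum _ hgsum.neg hsub
        intro n
        have := hpt n
        have := neg_abs_le (γ (1+n) * (S π₁ n - S π₂ n))
        linarith
      · apply Summable.tsum_le_tsum _ hsub hgsum
        intro n
        have := hpt n
        have := le_abs_self (γ (1+n) * (S π₁ n - S π₂ n))
        linarith
    have hgval : ∑' n, g n = ν₀ * Gam γ (k+1) := by
      rw [← Summable.sum_add_tsum_nat_add k hgsum]
      have h1 : ∑ i ∈ Finset.range k, g i = 0 :=
        Finset.sum_eq_zero fun i hi => by simp [hg, Finset.mem_range.mp hi]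
      have h2 : ∑' i : ℕ, g (i + k) = ν₀ * Gam γ (k+1) := by
        have : ∀ i : ℕ, g (i + k) = ν₀ * γ (k + 1 + i) := by
          intro i
          simp only [hg, if_neg (by omega : ¬ i + k < k)]
          rw [mul_comm]
          congr 2
          omega
        simp_rw [this]
        rw [tsum_mul_left, Gam]
      rw [h1, h2, zero_add]
    have hfin : |V γ r π₁ ν [] - V γ r π₂ ν []|
        ≤ (1 / (Gam γ 1 * ν₀)) * (ν₀ * Gam γ (k+1)) := by
      rw [hV π₁, hV π₂, ← mul_sub, abs_mul, hdiff]
      have hcpos : (0:ℝ) < 1 / (Gam γ 1 * ν₀) :=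
        div_pos one_pos (mul_pos hΓ1 hν)
      rw [abs_of_nonneg hcpos.le, ← hgval]
      exact mul_le_mul_of_nonneg_left habs hcpos.le
    calc |V γ r π₁ ν [] - V γ r π₂ ν []|
        ≤ (1 / (Gam γ 1 * ν₀)) * (ν₀ * Gam γ (k+1)) := hfin
      _ = Gam γ (k + 1) / Gam γ 1 := by
          rw [div_mul_eq_mul_div, one_mul, div_eq_div_iff (mul_pos hΓ1 hν).ne' hΓ1.ne']
          ring
  · have h0 : ∀ π : Policy A E, V γ r π ν [] = 0 := by
      intro π; rw [V, if_neg]; rintro ⟨_, h⟩; exact hν h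
    rw [h0, h0]; simpa using hRHS
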